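/- Let Λ = (G,γ) be an admissible d-colored multigraph with nonempty vertex set. The rank-1 elements (vertices) of P_Λ are exactly the pairs (H, {1,…,d}\{i}) with i ∈ {1,…,d} and H a connected component of G_{{1,…,d}\{i}}; and the map ψ sending such a vertex to i is a proper d-coloring of P_Λ: for every (H,S) ∈ P_Λ, assigning to each vertex v ≤ (H,S) of P_Λ the color ψ(v) gives a bijection from the set of vertices below (H,S) onto {1,…,d} \ S. In particular, distinct vertices lying below a common element of P_Λ receive distinct colors. -/

import Mathlib

noncomputable section
attribute [local instance] Classical.propDecidable

/-- A finite multigraph with colored edges, given by a finite vertex set `Vs` inside an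
ambient type `V` and a finite set of edges; an edge is a triple `(u, v, i)` recording its
two endpoints (in an arbitrary chosen orientation) and its color `i`.  Since every vertex
of an admissible colored multigraph is incident to at most one edge of each color, this
faithfully represents the multigraphs occurring in crystallization theory. -/
structure MG (V : Type) where
  Vs : Finset V
  Es : Finset (V × V × ℕ)

namespace MG

variable {V : Type}

/-- The edge `e` joins the vertices `u` and `v`, i.e. `φ(e) = {u, v}`. -/
def joins (e : V × V × ℕ) (u v : V) : Prop :=
  (e.1 = u ∧ e.2.1 = v) ∨ (e.1 = v ∧ e.2.1 = u)

/-- The vertex `v` is an endpoint of the edge `e`. -/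
def incid (e : V × V × ℕ) (v : V) : Prop := e.1 = v ∨ e.2.1 = v

/-- Adjacency in the spanning subgraph `G_S` of edges whose color lies in `S`. -/
def Adj (G : MG V) (S : Finset ℕ) (u v : V) : Prop :=
  u ∈ G.Vs ∧ v ∈ G.Vs ∧ ∃ e ∈ G.Es, e.2.2 ∈ S ∧ joins e u v

/-- `G.Conn S u v`: `u` and `v` are connected by a path of edges of `G_S`.
Two vertices are *disconnected* on `G_S` if `¬ G.Conn S u v`. -/
def Conn (G : MG V) (S : Finset ℕ) : V → V → Prop :=
  Relation.ReflTransGen (G.Adj S)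

/-- Well-formedness of a multigraph with colors in `K`: endpoints of edges are vertices,
there are no loops, and all colors lie in `K`. -/
def WF (K : Finset ℕ) (G : MG V) : Prop :=
  ∀ e ∈ G.Es, e.1 ∈ G.Vs ∧ e.2.1 ∈ G.Vs ∧ e.1 ≠ e.2.1 ∧ e.2.2 ∈ K

/-- Admissibility of a `K`-colored multigraph: it is (loopless and) connected, and for
each color `i ∈ K` the edges of color `i` form a perfect matching of the vertex set. -/
def Admissible (K : Finset ℕ) (G : MG V) : Prop :=
  WF K G ∧ (∀ u ∈ G.Vs, ∀ v ∈ G.Vs, G.Conn K u v) ∧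
    (∀ i ∈ K, ∀ v ∈ G.Vs, ∃! e, e ∈ G.Es ∧ e.2.2 = i ∧ incid e v)

/-- The connected component of `G_S` containing the vertex `v`. -/
def comp (G : MG V) (S : Finset ℕ) (v : V) : Set V := {w | G.Conn S v w}

/-- The poset `P_Λ` associated to a `K`-colored multigraph: its elements are pairs
`(H, S)` of a subset `S ⊆ K` and a connected component `H` of `G_S`. -/
def PElem (K : Finset ℕ) (G : MG V) : Type :=
  {p : Set V × Finset ℕ // p.2 ⊆ K ∧ ∃ v ∈ G.Vs, p.1 = G.comp p.2 v}

/-- The order of `P_Λ`: `(H, S) ≤ (H', S')` iff `S' ⊆ S` and `H' ⊆ H`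
(so that `(G, K)` is the least element). -/
instance (K : Finset ℕ) (G : MG V) : PartialOrder (PElem K G) where
  le p q := q.1.2 ⊆ p.1.2 ∧ q.1.1 ⊆ p.1.1
  le_refl p := ⟨subset_rfl, subset_rfl⟩
  le_trans p q r h₁ h₂ := ⟨h₂.1.trans h₁.1, h₂.2.trans h₁.2⟩
  le_antisymm p q h₁ h₂ :=
    Subtype.ext (Prod.ext (subset_antisymm h₂.2 h₁.2) (subset_antisymm h₂.1 h₁.1))

/-- The subgraph of `G` with vertex set `H` and the edges of `G_S` joining vertices
of `H`, viewed as an `S`-colored multigraph. -/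
def restrict (G : MG V) (S : Finset ℕ) (H : Set V) : MG V where
  Vs := G.Vs.filter (· ∈ H)
  Es := G.Es.filter fun e => e.2.2 ∈ S ∧ e.1 ∈ H ∧ e.2.1 ∈ H

/-- The cancelling `del_{x,y} Λ` of the pair of vertices `x, y` in a `K`-colored
multigraph: delete `x`, `y` and all edges incident to them, and for every color
`i ∈ K` not realized on an edge joining `x` and `y`, add a new edge of color `i`
joining the color-`i` neighbour of `x` to the color-`i` neighbour of `y`. -/
def del (K : Finset ℕ) (G : MG V) (x y : V) : MG V :=
  { Vs := G.Vs \ {x, y}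
    Es := (G.Es.filter fun e => ¬ incid e x ∧ ¬ incid e y) ∪
      ((G.Vs ×ˢ G.Vs ×ˢ
          (K \ (K.filter fun i => ∃ e ∈ G.Es, e.2.2 = i ∧ joins e x y))).filter fun q =>
        q.1 ≠ x ∧ q.1 ≠ y ∧ q.2.1 ≠ x ∧ q.2.1 ≠ y ∧
        (∃ e ∈ G.Es, e.2.2 = q.2.2 ∧ joins e x q.1) ∧
        (∃ e ∈ G.Es, e.2.2 = q.2.2 ∧ joins e y q.2.1)) }

end MG

namespace MG

variable {V : Type}

lemma adj_symm (G : MG V) (S : Finset ℕ) {u v : V} (h : G.Adj S u v) : G.Adj S v u := by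
  obtain ⟨h1, h2, e, he, hc, hj⟩ := h
  exact ⟨h2, h1, e, he, hc, hj.symm⟩

lemma conn_symm (G : MG V) (S : Finset ℕ) {u v : V} (h : G.Conn S u v) : G.Conn S v u :=
  (@Relation.ReflTransGen.stdSymm _ _ ⟨fun _ _ h => G.adj_symm S h⟩).symm _ _ h

lemma comp_eq_of_conn (G : MG V) (S : Finset ℕ) {a u : V} (h : G.Conn S a u) :
    G.comp S a = G.comp S u := by
  ext w
  constructor
  · intro hw
    exact (G.conn_symm S h).trans hw
  · intro hw
    exact h.trans hw

lemma comp_eq_of_mem (G : MG V) (S : Finset ℕ) {a b u : V}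
    (ha : u ∈ G.comp S a) (hb : u ∈ G.comp S b) : G.comp S a = G.comp S b := by
  rw [G.comp_eq_of_conn S ha, G.comp_eq_of_conn S hb]

lemma conn_mono (G : MG V) {S T : Finset ℕ} (hST : S ⊆ T) {u v : V}
    (h : G.Conn S u v) : G.Conn T u v := by
  refine Relation.ReflTransGen.mono (fun a b hab => ?_) _ _ h
  obtain ⟨h1, h2, e, he, hc, hj⟩ := hab
  exact ⟨h1, h2, e, he, hST hc, hj⟩

lemma mem_comp_self (G : MG V) (S : Finset ℕ) (v : V) : v ∈ G.comp S v :=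
  Relation.ReflTransGen.refl

/-- Two elements of `P_Λ` with the same color set and intersecting components are equal. -/
lemma pelem_eq {K : Finset ℕ} {G : MG V} (v w : PElem K G)
    (hS : v.1.2 = w.1.2) {u : V} (hu : u ∈ v.1.1) (hu' : u ∈ w.1.1) : v = w := by
  obtain ⟨_, a, _, ha⟩ := v.2
  obtain ⟨_, b, _, hb⟩ := w.2
  refine Subtype.ext (Prod.ext ?_ hS)
  rw [ha] at hu
  rw [hb] at hu'
  rw [ha, hb, hS]
  rw [hS] at hu
  exact G.comp_eq_of_mem _ hu hu'

end MG

/-- For an admissible `d`-colored multigraph `Λ` with nonempty vertex set: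
(a) the vertices (rank-1 elements) of `P_Λ` are exactly the pairs `(H, {1,…,d}\{i})`
with `i ∈ {1,…,d}` (`H` being a component of `G_{{1,…,d}\{i}}` by definition of `P_Λ`);
(b) sending such a vertex to `i` is a proper `d`-coloring: for every `(H,S) ∈ P_Λ` and
every `i ∈ {1,…,d} \ S` there is a unique vertex of color `i` below `(H,S)`, every
vertex below `(H,S)` has its color in `{1,…,d} \ S`, and in particular distinct vertices
below a common element receive distinct colors. -/
theorem stmt5 (d : ℕ) (hd : 1 ≤ d) {V : Type} (G : MG V)
    (hG : MG.Admissible (Finset.Icc 1 d) G) (hne : G.Vs.Nonempty) :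
    (∀ p : MG.PElem (Finset.Icc 1 d) G,
      ((Finset.Icc 1 d \ p.1.2).card = 1 ↔
        ∃ i ∈ Finset.Icc 1 d, p.1.2 = Finset.Icc 1 d \ {i})) ∧
    (∀ p : MG.PElem (Finset.Icc 1 d) G, ∀ i ∈ Finset.Icc 1 d \ p.1.2,
      ∃! v : MG.PElem (Finset.Icc 1 d) G, Finset.Icc 1 d \ v.1.2 = {i} ∧ v ≤ p) ∧
    (∀ p v : MG.PElem (Finset.Icc 1 d) G, (Finset.Icc 1 d \ v.1.2).card = 1 → v ≤ p →
      Finset.Icc 1 d \ v.1.2 ⊆ Finset.Icc 1 d \ p.1.2) ∧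
    (∀ p v w : MG.PElem (Finset.Icc 1 d) G,
      (Finset.Icc 1 d \ v.1.2).card = 1 → (Finset.Icc 1 d \ w.1.2).card = 1 →
      v ≤ p → w ≤ p → v ≠ w →
      Finset.Icc 1 d \ v.1.2 ≠ Finset.Icc 1 d \ w.1.2) := by
  set K := Finset.Icc 1 d with hK
  refine ⟨?_, ?_, ?_, ?_⟩
  · -- (a)
    intro p
    constructor
    · intro h
      obtain ⟨i, hi⟩ := Finset.card_eq_one.mp h
      refine ⟨i, ?_, ?_⟩
      · have : i ∈ K \ p.1.2 := hi ▸ Finset.mem_singleton_self i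
        exact (Finset.mem_sdiff.mp this).1
      · rw [← hi, Finset.sdiff_sdiff_eq_self p.2.1]
    · rintro ⟨i, hiK, hp⟩
      rw [hp, Finset.sdiff_sdiff_eq_self (Finset.singleton_subset_iff.mpr hiK)]
      simp
  · -- (b)
    intro p i hi
    obtain ⟨hiK, hiS⟩ := Finset.mem_sdiff.mp hi
    obtain ⟨hpK, v₀, hv₀, hp1⟩ := p.2
    have hsub : p.1.2 ⊆ K \ {i} :=
      Finset.subset_sdiff.mpr ⟨hpK, Finset.disjoint_singleton_right.mpr hiS⟩
    have hsd : K \ (K \ {i}) = {i} :=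
      Finset.sdiff_sdiff_eq_self (Finset.singleton_subset_iff.mpr hiK)
    refine ⟨⟨⟨G.comp (K \ {i}) v₀, K \ {i}⟩, Finset.sdiff_subset, v₀, hv₀, rfl⟩,
      ⟨hsd, hsub, ?_⟩, ?_⟩
    · -- p.1.1 ⊆ comp (K \ {i}) v₀
      rw [hp1]
      intro w hw
      exact G.conn_mono hsub hw
    · rintro v' ⟨hv'card, hle⟩
      have hS' : v'.1.2 = K \ {i} := by
        have := Finset.sdiff_sdiff_eq_self v'.2.1
        rw [← this, hv'card]
      refine MG.pelem_eq v' _ hS' (hle.2 ?_) (G.mem_comp_self _ v₀)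
      rw [hp1]; exact G.mem_comp_self _ v₀
  · -- (c)
    intro p v _ hle
    exact Finset.sdiff_subset_sdiff (le_refl K) hle.1
  · -- (d)
    intro p v w _ _ hvp hwp hne heq
    apply hne
    have hS : v.1.2 = w.1.2 := by
      rw [← Finset.sdiff_sdiff_eq_self v.2.1, ← Finset.sdiff_sdiff_eq_self w.2.1, heq]
    obtain ⟨hpK, v₀, hv₀, hp1⟩ := p.2
    have hv₀p : v₀ ∈ p.1.1 := by rw [hp1]; exact G.mem_comp_self _ v₀
    exact MG.pelem_eq v w hS (hvp.2 hv₀p) (hwp.2 hv₀p)
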